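/- arXiv:1702.06967 — 9 statements merged into one kernel-verified Lean document; each statement's English description precedes it below -/
import Mathlib

section
/- (Subadditivity of ρ̂.) Let a_•, b_• be vanishing sequences of rank r and degree d, let g_1, g_2 ≥ 0 be integers with g = g_1 + g_2, and let b¹_•, a²_• be complementary vanishing sequences of rank r and degree d. Then ρ̂(g,d;a_•,b_•) ≥ ρ̂(g_1,d;a_•,b¹_•) + ρ̂(g_2,d;a²_•,b_•). -/
/-- `a` is a vanishing sequence of rank `r` and degree `d`: a strictly increasing
sequence of integers `0 ≤ a 0 < a 1 < ⋯ < a r ≤ d`. -/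
def IsVanishingSeq (r : ℕ) (d : ℤ) (a : Fin (r + 1) → ℤ) : Prop :=
  StrictMono a ∧ 0 ≤ a 0 ∧ a (Fin.last r) ≤ d

/-- The Brill–Noether number `ρ(g,d;a,b) = g - ∑ⱼ (aⱼ + b_{r-j} - (d - g))`. -/
def BNrho (g : ℤ) (r : ℕ) (d : ℤ) (a b : Fin (r + 1) → ℤ) : ℤ :=
  g - ∑ j : Fin (r + 1), (a j + b j.rev - (d - g))

/-- The adjusted Brill–Noether number
`ρ̂(g,d;a,b) = g - ∑ⱼ max (aⱼ + b_{r-j} - (d - g)) 0`. -/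
def BNrhoHat (g : ℤ) (r : ℕ) (d : ℤ) (a b : Fin (r + 1) → ℤ) : ℤ :=
  g - ∑ j : Fin (r + 1), max (a j + b j.rev - (d - g)) 0

/-- Subadditivity of ρ̂: for vanishing sequences `a`, `b` of rank `r` and
degree `d`, integers `g₁, g₂ ≥ 0` with `g = g₁ + g₂`, and complementary vanishing
sequences `b¹`, `a²` (i.e. `b¹ⱼ + a²_{r-j} = d` for all `j`),
`ρ̂(g,d;a,b) ≥ ρ̂(g₁,d;a,b¹) + ρ̂(g₂,d;a²,b)`. -/
theorem rhoHat_subadditive (r : ℕ) (d : ℤ) (hd : 0 ≤ d)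
    (g g₁ g₂ : ℤ) (hg₁ : 0 ≤ g₁) (hg₂ : 0 ≤ g₂) (hg : g = g₁ + g₂)
    (a b b₁ a₂ : Fin (r + 1) → ℤ)
    (ha : IsVanishingSeq r d a) (hb : IsVanishingSeq r d b)
    (hb₁ : IsVanishingSeq r d b₁) (ha₂ : IsVanishingSeq r d a₂)
    (hcomp : ∀ j : Fin (r + 1), b₁ j + a₂ j.rev = d) :
    BNrhoHat g₁ r d a b₁ + BNrhoHat g₂ r d a₂ b ≤ BNrhoHat g r d a b := by
  have key : ∀ j : Fin (r + 1), max (a j + b j.rev - (d - g)) 0 ≤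
      max (a j + b₁ j.rev - (d - g₁)) 0 + max (a₂ j + b j.rev - (d - g₂)) 0 := by
    intro j
    have h := hcomp j.rev
    rw [Fin.rev_rev] at h
    apply max_le
    · have h1 := le_max_left (a j + b₁ j.rev - (d - g₁)) 0
      have h2 := le_max_left (a₂ j + b j.rev - (d - g₂)) 0
      linarith
    · have h1 := le_max_right (a j + b₁ j.rev - (d - g₁)) 0
      have h2 := le_max_right (a₂ j + b j.rev - (d - g₂)) 0
      linarith
  have hsum := Finset.sum_le_sum (fun j (_ : j ∈ Finset.univ) => key j)
  rw [Finset.sum_add_distrib] at hsum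
  simp only [BNrhoHat]
  linarith
end

section
/- (Equality case of subadditivity of ρ̂.) Let a_•, b_• be vanishing sequences of rank r and degree d, let g_1, g_2 ≥ 0 be integers with g = g_1 + g_2, and let b¹_•, a²_• be complementary vanishing sequences of rank r and degree d. Then ρ̂(g,d;a_•,b_•) = ρ̂(g_1,d;a_•,b¹_•) + ρ̂(g_2,d;a²_•,b_•) holds if and only if: for every j with a_j + b¹_{r−j} > d − g_1 one has a²_j + b_{r−j} ≥ d − g_2, and for every j with a²_j + b_{r−j} > d − g_2 one has a_j + b¹_{r−j} ≥ d − g_1. -/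
/-- Equality case of subadditivity of ρ̂:
`ρ̂(g,d;a,b) = ρ̂(g₁,d;a,b¹) + ρ̂(g₂,d;a²,b)` holds if and only if:
for every `j` with `aⱼ + b¹_{r-j} > d - g₁` one has `a²ⱼ + b_{r-j} ≥ d - g₂`, and
for every `j` with `a²ⱼ + b_{r-j} > d - g₂` one has `aⱼ + b¹_{r-j} ≥ d - g₁`. -/
theorem rhoHat_subadditive_eq_iff (r : ℕ) (d : ℤ) (hd : 0 ≤ d)
    (g g₁ g₂ : ℤ) (hg₁ : 0 ≤ g₁) (hg₂ : 0 ≤ g₂) (hg : g = g₁ + g₂)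
    (a b b₁ a₂ : Fin (r + 1) → ℤ)
    (ha : IsVanishingSeq r d a) (hb : IsVanishingSeq r d b)
    (hb₁ : IsVanishingSeq r d b₁) (ha₂ : IsVanishingSeq r d a₂)
    (hcomp : ∀ j : Fin (r + 1), b₁ j + a₂ j.rev = d) :
    BNrhoHat g r d a b = BNrhoHat g₁ r d a b₁ + BNrhoHat g₂ r d a₂ b ↔
      (∀ j : Fin (r + 1), d - g₁ < a j + b₁ j.rev → d - g₂ ≤ a₂ j + b j.rev) ∧
      (∀ j : Fin (r + 1), d - g₂ < a₂ j + b j.rev → d - g₁ ≤ a j + b₁ j.rev) := by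
  have key : ∀ j : Fin (r + 1),
      a j + b j.rev - (d - g) =
        (a j + b₁ j.rev - (d - g₁)) + (a₂ j + b j.rev - (d - g₂)) := by
    intro j
    have h := hcomp j.rev
    rw [Fin.rev_rev] at h
    omega
  have hle : ∀ j ∈ Finset.univ, max (a j + b j.rev - (d - g)) 0 ≤
      max (a j + b₁ j.rev - (d - g₁)) 0 + max (a₂ j + b j.rev - (d - g₂)) 0 := by
    intro j _
    have := key j
    omega
  have hsum : BNrhoHat g r d a b = BNrhoHat g₁ r d a b₁ + BNrhoHat g₂ r d a₂ b ↔
      ∑ j : Fin (r + 1), max (a j + b j.rev - (d - g)) 0 =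
      ∑ j : Fin (r + 1), (max (a j + b₁ j.rev - (d - g₁)) 0 +
        max (a₂ j + b j.rev - (d - g₂)) 0) := by
    unfold BNrhoHat
    rw [Finset.sum_add_distrib]
    omega
  rw [hsum, Finset.sum_eq_sum_iff_of_le hle]
  constructor
  · intro h
    constructor
    · intro j hj
      have := h j (Finset.mem_univ j)
      have := key j
      omega
    · intro j hj
      have := h j (Finset.mem_univ j)
      have := key j
      omega
  · rintro ⟨h1, h2⟩ j _
    have := h1 j
    have := h2 j
    have := key j
    omega
end

section
/- Let g ≥ 1 be an integer, and let a_•, b_• be vanishing sequences of rank r and degree d with ρ̂(g,d;a_•,b_•) = 0. Let b¹_•, a²_• be complementary vanishing sequences of rank r and degree d with ρ̂(1,d;a_•,b¹_•) ≥ 0 and ρ̂(g−1,d;a²_•,b_•) ≥ 0. If an index j_0 satisfies a_{j_0} + b_{r−j_0} < d − g, then a_{j_0} + b¹_{r−j_0} ≠ d. -/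
/-- with `g ≥ 1`, `ρ̂(g,d;a,b) = 0`, and complementary vanishing sequences
`b¹`, `a²` with `ρ̂(1,d;a,b¹) ≥ 0` and `ρ̂(g-1,d;a²,b) ≥ 0`, if an index `j₀` satisfies
`a_{j₀} + b_{r-j₀} < d - g` then `a_{j₀} + b¹_{r-j₀} ≠ d`. -/
theorem not_eq_d_of_lt (r : ℕ) (d : ℤ) (hd : 0 ≤ d) (g : ℤ) (hg : 1 ≤ g)
    (a b b₁ a₂ : Fin (r + 1) → ℤ)
    (ha : IsVanishingSeq r d a) (hb : IsVanishingSeq r d b)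
    (hb₁ : IsVanishingSeq r d b₁) (ha₂ : IsVanishingSeq r d a₂)
    (hcomp : ∀ j : Fin (r + 1), b₁ j + a₂ j.rev = d)
    (hρ : BNrhoHat g r d a b = 0)
    (hρ₁ : 0 ≤ BNrhoHat 1 r d a b₁) (hρ₂ : 0 ≤ BNrhoHat (g - 1) r d a₂ b)
    (j₀ : Fin (r + 1)) (hj₀ : a j₀ + b j₀.rev < d - g) :
    a j₀ + b₁ j₀.rev ≠ d := by
  intro heq
  have hcomp' : ∀ j : Fin (r + 1), a₂ j = d - b₁ j.rev := by
    intro j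
    have h := hcomp j.rev
    rw [Fin.rev_rev] at h
    linarith
  have h1 : ∑ j : Fin (r + 1), max (a j + b₁ j.rev - (d - 1)) 0 ≤ 1 := by
    unfold BNrhoHat at hρ₁; linarith
  have hrest : ∀ j, j ≠ j₀ → a j + b₁ j.rev ≤ d - 1 := by
    intro j hj
    by_contra h
    push_neg at h
    have hsub : ({j, j₀} : Finset (Fin (r + 1))) ⊆ Finset.univ := Finset.subset_univ _
    have h2 : ∑ i ∈ ({j, j₀} : Finset (Fin (r + 1))), max (a i + b₁ i.rev - (d - 1)) 0
        ≤ ∑ i : Fin (r + 1), max (a i + b₁ i.rev - (d - 1)) 0 := by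
      apply Finset.sum_le_sum_of_subset_of_nonneg hsub
      intro i _ _
      exact le_max_right _ _
    rw [Finset.sum_pair hj] at h2
    omega
  have hS : ∑ j : Fin (r + 1), max (a j + b j.rev - (d - g)) 0 = g := by
    unfold BNrhoHat at hρ; linarith
  have hT : ∑ j : Fin (r + 1), max (a₂ j + b j.rev - (d - (g - 1))) 0 ≤ g - 1 := by
    unfold BNrhoHat at hρ₂; linarith
  have hle : ∑ j : Fin (r + 1), max (a j + b j.rev - (d - g)) 0
      ≤ ∑ j : Fin (r + 1), max (a₂ j + b j.rev - (d - (g - 1))) 0 := by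
    apply Finset.sum_le_sum
    intro j _
    by_cases hjj : j = j₀
    · subst hjj
      have := hcomp' j
      omega
    · have h3 := hrest j hjj
      have h4 := hcomp' j
      omega
  omega
end

section
/- Let g ≥ 1 be an integer, and let a_•, b_• be vanishing sequences of rank r and degree d with ρ̂(g,d;a_•,b_•) = 0. Let b¹_•, a²_• be complementary vanishing sequences of rank r and degree d with ρ̂(1,d;a_•,b¹_•) ≥ 0 and ρ̂(g−1,d;a²_•,b_•) ≥ 0. Suppose j_0 is an index such that: a_{j_0} + b_{r−j_0} < d − g; the sequence obtained from a_• by replacing a_{j_0} with a_{j_0}+1 is again a vanishing sequence; and a_{j_0} + b¹_{r−j_0} = d − 1. Then: (i) a²_{j_0} + b_{r−j_0} < d − (g−1); (ii) if j_0 < r then a²_{j_0+1} > a²_{j_0} + 1; and (iii) the sequences b̄¹_• obtained from b¹_• by replacing b¹_{r−j_0} with b¹_{r−j_0} − 1, and ā²_• obtained from a²_• by replacing a²_{j_0} with a²_{j_0} + 1, are complementary vanishing sequences of rank r and degree d satisfying ρ̂(1,d;a_•,b̄¹_•) ≥ 0 and ρ̂(g−1,d;ā²_•,b_•) ≥ 0.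 -/
/-- with `g ≥ 1`, `ρ̂(g,d;a,b) = 0`, complementary vanishing sequences
`b¹`, `a²` with `ρ̂(1,d;a,b¹) ≥ 0` and `ρ̂(g-1,d;a²,b) ≥ 0`, and `j₀` an index such that
`a_{j₀} + b_{r-j₀} < d - g`, replacing `a_{j₀}` by `a_{j₀} + 1` gives a vanishing sequence,
and `a_{j₀} + b¹_{r-j₀} = d - 1`, then:
(i) `a²_{j₀} + b_{r-j₀} < d - (g-1)`;
(ii) if `j₀ < r` then `a²_{j₀+1} > a²_{j₀} + 1`; and
(iii) replacing `b¹_{r-j₀}` by `b¹_{r-j₀} - 1` and `a²_{j₀}` by `a²_{j₀} + 1` yields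
complementary vanishing sequences `b̄¹`, `ā²` with `ρ̂(1,d;a,b̄¹) ≥ 0` and
`ρ̂(g-1,d;ā²,b) ≥ 0`. -/
theorem second_move_setup (r : ℕ) (d : ℤ) (hd : 0 ≤ d) (g : ℤ) (hg : 1 ≤ g)
    (a b b₁ a₂ : Fin (r + 1) → ℤ)
    (ha : IsVanishingSeq r d a) (hb : IsVanishingSeq r d b)
    (hb₁ : IsVanishingSeq r d b₁) (ha₂ : IsVanishingSeq r d a₂)
    (hcomp : ∀ j : Fin (r + 1), b₁ j + a₂ j.rev = d)
    (hρ : BNrhoHat g r d a b = 0)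
    (hρ₁ : 0 ≤ BNrhoHat 1 r d a b₁) (hρ₂ : 0 ≤ BNrhoHat (g - 1) r d a₂ b)
    (j₀ : Fin (r + 1))
    (hj₀b : a j₀ + b j₀.rev < d - g)
    (habar : IsVanishingSeq r d (Function.update a j₀ (a j₀ + 1)))
    (hj₀b₁ : a j₀ + b₁ j₀.rev = d - 1) :
    a₂ j₀ + b j₀.rev < d - (g - 1) ∧
    ((j₀ : ℕ) < r → ∀ i : Fin (r + 1), (i : ℕ) = (j₀ : ℕ) + 1 → a₂ j₀ + 1 < a₂ i) ∧
    (IsVanishingSeq r d (Function.update b₁ j₀.rev (b₁ j₀.rev - 1)) ∧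
      IsVanishingSeq r d (Function.update a₂ j₀ (a₂ j₀ + 1)) ∧
      (∀ j : Fin (r + 1), Function.update b₁ j₀.rev (b₁ j₀.rev - 1) j +
        Function.update a₂ j₀ (a₂ j₀ + 1) j.rev = d) ∧
      0 ≤ BNrhoHat 1 r d a (Function.update b₁ j₀.rev (b₁ j₀.rev - 1)) ∧
      0 ≤ BNrhoHat (g - 1) r d (Function.update a₂ j₀ (a₂ j₀ + 1)) b) := by
  obtain ⟨haM, ha0, had⟩ := ha
  obtain ⟨hbM, hb0, hbd⟩ := hb
  obtain ⟨hb₁M, hb₁0, hb₁d⟩ := hb₁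
  obtain ⟨ha₂M, ha₂0, ha₂d⟩ := ha₂
  -- complement relation in the convenient form
  have hcomp' : ∀ j : Fin (r + 1), a₂ j = d - b₁ j.rev := by
    intro j
    have h := hcomp j.rev
    rw [Fin.rev_rev] at h
    linarith
  have ha₂j₀ : a₂ j₀ = a j₀ + 1 := by
    have := hcomp' j₀; linarith
  have hbnn : 0 ≤ b j₀.rev := le_trans hb0 (hbM.monotone (Fin.zero_le _))
  have hj₀b' : a j₀ + b j₀.rev + 1 ≤ d - g := by
    have := Int.add_one_le_iff.mpr hj₀b; linarith
  have haj₀d : a j₀ ≤ d - 2 := by linarith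
  -- per-term bound for ρ̂(1,d;a,b₁)
  have hsum₁ : ∑ j : Fin (r + 1), max (a j + b₁ j.rev - (d - 1)) 0 ≤ 1 := by
    unfold BNrhoHat at hρ₁; linarith
  have hterm₁ : ∀ j : Fin (r + 1), a j + b₁ j.rev ≤ d := by
    intro j
    have hle : max (a j + b₁ j.rev - (d - 1)) 0 ≤
        ∑ j : Fin (r + 1), max (a j + b₁ j.rev - (d - 1)) 0 :=
      Finset.single_le_sum (f := fun j => max (a j + b₁ j.rev - (d - 1)) 0)
        (fun i _ => le_max_right _ _) (Finset.mem_univ j)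
    have h2 := le_max_left (a j + b₁ j.rev - (d - 1)) (0 : ℤ)
    linarith
  have ha₂ge : ∀ j, a j ≤ a₂ j := by
    intro j; rw [hcomp' j]; linarith [hterm₁ j]
  -- (i)
  have part1 : a₂ j₀ + b j₀.rev < d - (g - 1) := by linarith
  -- (ii)
  have part2 : (j₀ : ℕ) < r → ∀ i : Fin (r + 1), (i : ℕ) = (j₀ : ℕ) + 1 →
      a₂ j₀ + 1 < a₂ i := by
    intro hj₀r i hi
    have hij : j₀ < i := by rw [Fin.lt_def]; omega
    have hine : i ≠ j₀ := by
      intro h; rw [h] at hi; omega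
    have hmono := ha₂M hij
    by_contra hcon
    push_neg at hcon
    have heq : a₂ i = a₂ j₀ + 1 := le_antisymm hcon (by linarith)
    have hai : a j₀ + 2 ≤ a i := by
      have h := habar.1 hij
      rw [Function.update_self, Function.update_of_ne hine] at h
      linarith [Int.add_one_le_iff.mpr h]
    have hb₁i : b₁ i.rev = d - a₂ i := by have := hcomp' i; linarith
    have htermi : (1 : ℤ) ≤ max (a i + b₁ i.rev - (d - 1)) 0 := by
      have h1 : (1 : ℤ) ≤ a i + b₁ i.rev - (d - 1) := by
        rw [hb₁i, heq, ha₂j₀]; linarith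
      exact le_trans h1 (le_max_left _ _)
    have hsplit := Finset.add_sum_erase Finset.univ
      (fun j => max (a j + b₁ j.rev - (d - 1)) 0) (Finset.mem_univ i)
    have hnn : ∀ j ∈ Finset.univ.erase i, (0:ℤ) ≤ max (a j + b₁ j.rev - (d - 1)) 0 :=
      fun _ _ => le_max_right _ _
    have hsle : ∑ j ∈ Finset.univ.erase i, max (a j + b₁ j.rev - (d - 1)) 0 ≤ 0 := by
      linarith
    have hzero : ∀ j ∈ Finset.univ.erase i, max (a j + b₁ j.rev - (d - 1)) 0 = 0 :=
      (Finset.sum_eq_zero_iff_of_nonneg hnn).mp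
        (le_antisymm hsle (Finset.sum_nonneg hnn))
    have hstrict : ∀ j : Fin (r + 1), j ≠ i → a j + b₁ j.rev ≤ d - 1 := by
      intro j hj
      have h := hzero j (Finset.mem_erase.mpr ⟨hj, Finset.mem_univ j⟩)
      have h3 := le_max_left (a j + b₁ j.rev - (d - 1)) (0 : ℤ)
      linarith
    have haieq : a i = a j₀ + 2 := by
      have := ha₂ge i; linarith
    have hbrev : b i.rev ≤ b j₀.rev - 1 := by
      have h := hbM (Fin.rev_lt_rev.mpr hij)
      linarith [Int.add_one_le_iff.mpr h]
    have ht_i : max (a i + b i.rev - (d - g)) 0 = 0 :=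
      max_eq_right (by linarith)
    have hsum_t : ∑ j : Fin (r + 1), max (a j + b j.rev - (d - g)) 0 = g := by
      unfold BNrhoHat at hρ; linarith
    have hsum_u : ∑ j : Fin (r + 1), max (a₂ j + b j.rev - (d - (g - 1))) 0 ≤ g - 1 := by
      unfold BNrhoHat at hρ₂; linarith
    have hpt : ∀ j ∈ Finset.univ.erase i,
        max (a j + b j.rev - (d - g)) 0 ≤ max (a₂ j + b j.rev - (d - (g - 1))) 0 := by
      intro j hj
      have hjne : j ≠ i := (Finset.mem_erase.mp hj).1
      have h1 : a j + 1 ≤ a₂ j := by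
        rw [hcomp' j]; linarith [hstrict j hjne]
      exact max_le_max (by linarith) le_rfl
    have hsplit2 := Finset.add_sum_erase Finset.univ
      (fun j => max (a j + b j.rev - (d - g)) 0) (Finset.mem_univ i)
    have hchain : ∑ j ∈ Finset.univ.erase i, max (a j + b j.rev - (d - g)) 0
        ≤ ∑ j : Fin (r + 1), max (a₂ j + b j.rev - (d - (g - 1))) 0 :=
      le_trans (Finset.sum_le_sum hpt)
        (Finset.sum_le_sum_of_subset_of_nonneg (Finset.erase_subset _ _)
          (fun _ _ _ => le_max_right _ _))
    linarith
  -- "`a₂` jumps by more than 1 after `j₀`" in a usable form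
  have hstep : ∀ y : Fin (r + 1), j₀ < y → a₂ j₀ + 1 < a₂ y := by
    intro y hy
    have hyv := Fin.lt_def.mp hy
    have hr : (j₀ : ℕ) < r := by have := y.isLt; omega
    have h2 := part2 hr ⟨(j₀ : ℕ) + 1, by omega⟩ rfl
    rcases eq_or_lt_of_le (show (⟨(j₀ : ℕ) + 1, by omega⟩ : Fin (r + 1)) ≤ y from
        Fin.le_def.mpr (by simpa using hyv)) with he | hl
    · rw [← he]; exact h2
    · exact lt_trans h2 (ha₂M hl)
  -- vanishing of the updated a₂
  have hA2van : IsVanishingSeq r d (Function.update a₂ j₀ (a₂ j₀ + 1)) := by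
    refine ⟨?_, ?_, ?_⟩
    · intro x y hxy
      rcases eq_or_ne x j₀ with hx | hx <;> rcases eq_or_ne y j₀ with hy | hy
      · exact absurd (hx.trans hy.symm) (ne_of_lt hxy)
      · rw [hx, Function.update_self, Function.update_of_ne hy]
        exact hstep y (hx ▸ hxy)
      · rw [Function.update_of_ne hx, hy, Function.update_self]
        have := ha₂M (hy ▸ hxy); linarith
      · rw [Function.update_of_ne hx, Function.update_of_ne hy]; exact ha₂M hxy
    · rcases eq_or_ne (0 : Fin (r + 1)) j₀ with h0 | h0
      · rw [h0, Function.update_self]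
        have := ha₂M.monotone (Fin.zero_le j₀); linarith
      · rw [Function.update_of_ne h0]; exact ha₂0
    · rcases eq_or_ne (Fin.last r) j₀ with hl | hl
      · rw [hl, Function.update_self]; linarith
      · rw [Function.update_of_ne hl]; exact ha₂d
  -- complementarity of the updated sequences
  have hcompNew : ∀ j : Fin (r + 1), Function.update b₁ j₀.rev (b₁ j₀.rev - 1) j +
      Function.update a₂ j₀ (a₂ j₀ + 1) j.rev = d := by
    intro j
    rcases eq_or_ne j j₀.rev with h | h
    · subst h
      rw [Function.update_self, Fin.rev_rev, Function.update_self]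
      have h2 := hcomp j₀.rev
      rw [Fin.rev_rev] at h2
      linarith
    · have h2 : j.rev ≠ j₀ := by
        intro hc; exact h (by rw [← hc, Fin.rev_rev])
      rw [Function.update_of_ne h, Function.update_of_ne h2]
      exact hcomp j
  -- vanishing of the updated b₁, via complementarity
  have hbb : ∀ j, Function.update b₁ j₀.rev (b₁ j₀.rev - 1) j =
      d - Function.update a₂ j₀ (a₂ j₀ + 1) j.rev := by
    intro j; have := hcompNew j; linarith
  have hB1van : IsVanishingSeq r d (Function.update b₁ j₀.rev (b₁ j₀.rev - 1)) := by
    obtain ⟨hM, h0, hd'⟩ := hA2van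
    refine ⟨?_, ?_, ?_⟩
    · intro x y hxy
      rw [hbb, hbb]
      have h := hM (Fin.rev_lt_rev.mpr hxy)
      linarith
    · rw [hbb]
      have h : Function.update a₂ j₀ (a₂ j₀ + 1) ((0 : Fin (r + 1)).rev) ≤ d := by
        rw [Fin.rev_zero]; exact hd'
      linarith
    · rw [hbb, Fin.rev_last]
      linarith
  -- the updated ρ̂(1) sum equals the old one
  have hsum_eq₁ : ∑ j : Fin (r + 1),
        max (a j + Function.update b₁ j₀.rev (b₁ j₀.rev - 1) j.rev - (d - 1)) 0
      = ∑ j : Fin (r + 1), max (a j + b₁ j.rev - (d - 1)) 0 := by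
    apply Finset.sum_congr rfl
    intro j _
    rcases eq_or_ne j j₀ with h | h
    · rw [h, Function.update_self]
      have h1 : max (a j₀ + (b₁ j₀.rev - 1) - (d - 1)) (0:ℤ) = 0 :=
        max_eq_right (by linarith)
      have h2 : max (a j₀ + b₁ j₀.rev - (d - 1)) (0:ℤ) = 0 :=
        max_eq_right (by linarith)
      rw [h1, h2]
    · rw [Function.update_of_ne (fun hc => h (Fin.rev_inj.mp hc))]
  -- the updated ρ̂(g-1) sum equals the old one
  have hsum_eq₂ : ∑ j : Fin (r + 1),
        max (Function.update a₂ j₀ (a₂ j₀ + 1) j + b j.rev - (d - (g - 1))) 0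
      = ∑ j : Fin (r + 1), max (a₂ j + b j.rev - (d - (g - 1))) 0 := by
    apply Finset.sum_congr rfl
    intro j _
    rcases eq_or_ne j j₀ with h | h
    · rw [h, Function.update_self]
      have h1 : max (a₂ j₀ + 1 + b j₀.rev - (d - (g - 1))) (0:ℤ) = 0 :=
        max_eq_right (by linarith)
      have h2 : max (a₂ j₀ + b j₀.rev - (d - (g - 1))) (0:ℤ) = 0 :=
        max_eq_right (by linarith)
      rw [h1, h2]
    · rw [Function.update_of_ne h]
  refine ⟨part1, part2, hB1van, hA2van, hcompNew, ?_, ?_⟩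
  · unfold BNrhoHat at hρ₁ ⊢
    rw [hsum_eq₁]; exact hρ₁
  · unfold BNrhoHat at hρ₂ ⊢
    rw [hsum_eq₂]; exact hρ₂
end

section
/- (First type of move.) Let a_•, c_• be vanishing sequences of rank r and degree d with ρ̂(1,d;a_•,c_•) ≥ 0 and ρ(1,d;a_•,c_•) > 0. Let j_0 be the minimal index at which a_j + c_{r−j} attains its minimum value over j = 0,…,r. Then: (i) a_{j_0} + c_{r−j_0} ≤ d − 1; (ii) either j_0 = 0 or c_{r−j_0+1} ≥ c_{r−j_0} + 2; and (iii) the sequence c′_• obtained from c_• by replacing c_{r−j_0} with c_{r−j_0} + 1 is a vanishing sequence of rank r and degree d with ρ̂(1,d;a_•,c′_•) ≥ 0 and ρ(1,d;a_•,c′_•) = ρ(1,d;a_•,c_•) − 1. -/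
/-- First type of move: for vanishing sequences `a`, `c` with
`ρ̂(1,d;a,c) ≥ 0` and `ρ(1,d;a,c) > 0`, and `j₀` the minimal index at which
`a_j + c_{r-j}` attains its minimum, then:
(i) `a_{j₀} + c_{r-j₀} ≤ d - 1`;
(ii) either `j₀ = 0` or `c_{r-j₀+1} ≥ c_{r-j₀} + 2`; and
(iii) replacing `c_{r-j₀}` by `c_{r-j₀} + 1` yields a vanishing sequence `c'` with
`ρ̂(1,d;a,c') ≥ 0` and `ρ(1,d;a,c') = ρ(1,d;a,c) - 1`. -/
theorem first_move (r : ℕ) (d : ℤ) (hd : 0 ≤ d)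
    (a c : Fin (r + 1) → ℤ)
    (ha : IsVanishingSeq r d a) (hc : IsVanishingSeq r d c)
    (hρhat : 0 ≤ BNrhoHat 1 r d a c) (hρ : 0 < BNrho 1 r d a c)
    (j₀ : Fin (r + 1))
    (hmin : ∀ j : Fin (r + 1), a j₀ + c j₀.rev ≤ a j + c j.rev)
    (hminIdx : ∀ j : Fin (r + 1), a j + c j.rev = a j₀ + c j₀.rev → j₀ ≤ j) :
    a j₀ + c j₀.rev ≤ d - 1 ∧
    (j₀ = 0 ∨ ∀ i : Fin (r + 1), (i : ℕ) = (j₀.rev : ℕ) + 1 → c j₀.rev + 2 ≤ c i) ∧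
    (IsVanishingSeq r d (Function.update c j₀.rev (c j₀.rev + 1)) ∧
      0 ≤ BNrhoHat 1 r d a (Function.update c j₀.rev (c j₀.rev + 1)) ∧
      BNrho 1 r d a (Function.update c j₀.rev (c j₀.rev + 1)) = BNrho 1 r d a c - 1) := by
  set m : Fin (r + 1) → ℤ := fun j => a j + c j.rev - (d - 1) with hm
  have hS : ∑ j : Fin (r + 1), m j ≤ 0 := by
    have : BNrho 1 r d a c = 1 - ∑ j : Fin (r + 1), m j := rfl
    omega
  have hmin' : ∀ j : Fin (r + 1), m j₀ ≤ m j := by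
    intro j; have := hmin j; simp only [hm]; omega
  have h1 : m j₀ ≤ 0 := by
    by_contra h
    push_neg at h
    have : (0:ℤ) < ∑ j : Fin (r + 1), m j := by
      calc (0:ℤ) < ∑ _j : Fin (r + 1), m j₀ := by
            simp [Finset.sum_const]
            positivity
        _ ≤ ∑ j : Fin (r + 1), m j := Finset.sum_le_sum fun j _ => hmin' j
    omega
  have hi : a j₀ + c j₀.rev ≤ d - 1 := by simp only [hm] at h1; omega
  have h2 : j₀ ≠ 0 → ∀ i : Fin (r + 1), (i : ℕ) = (j₀.rev : ℕ) + 1 → c j₀.rev + 2 ≤ c i := by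
    intro hne i hival
    have hj0pos : 0 < (j₀ : ℕ) := by
      rcases Nat.eq_zero_or_pos j₀.val with h | h
      · exact absurd (Fin.ext h) hne
      · exact h
    set j' : Fin (r + 1) := ⟨(j₀ : ℕ) - 1, by omega⟩ with hj'
    have hrev : j'.rev = i := by
      ext
      simp [Fin.val_rev, hival, hj']
      omega
    have hlt : j' < j₀ := by
      rw [Fin.lt_def]; show (j₀ : ℕ) - 1 < (j₀ : ℕ); omega
    have hstrict : a j₀ + c j₀.rev < a j' + c j'.rev := by
      rcases lt_or_eq_of_le (hmin j') with h | h
      · exact h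
      · exact absurd (hminIdx j' h.symm) (not_le.mpr hlt)
    have haj : a j' < a j₀ := ha.1 hlt
    rw [hrev] at hstrict
    omega
  have hrevinj : ∀ j : Fin (r + 1), j ≠ j₀ → j.rev ≠ j₀.rev :=
    fun j h hh => h (Fin.rev_injective hh)
  have hpoint : ∀ j : Fin (r + 1),
      Function.update c j₀.rev (c j₀.rev + 1) j.rev = c j.rev + if j = j₀ then 1 else 0 := by
    intro j
    rcases eq_or_ne j j₀ with h | h
    · subst h; simp [Function.update_self]
    · rw [Function.update_of_ne (hrevinj j h)]; simp [h]
  refine ⟨hi, ?_, ⟨?_, ?_, ?_⟩, ?_, ?_⟩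
  · rcases eq_or_ne j₀ 0 with h | h
    · exact Or.inl h
    · exact Or.inr (h2 h)
  -- strict mono
  · intro i j hij
    rcases eq_or_ne i j₀.rev with hi' | hi' <;> rcases eq_or_ne j j₀.rev with hj' | hj'
    · omega
    · subst hi'
      rw [Function.update_self, Function.update_of_ne hj']
      have hjr : (j₀.rev : ℕ) < r := by
        have hjlt := j.is_lt
        have := Fin.lt_def.mp hij
        omega
      have hne0 : j₀ ≠ 0 := by
        intro h0
        rw [h0, Fin.rev_zero] at hjr
        simp [Fin.last] at hjr
      set i' : Fin (r + 1) := ⟨(j₀.rev : ℕ) + 1, by omega⟩ with hi'def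
      have hkey : c j₀.rev + 2 ≤ c i' := h2 hne0 i' rfl
      have hle : i' ≤ j := by
        have hv := Fin.lt_def.mp hij
        rw [Fin.le_def]
        show (j₀.rev : ℕ) + 1 ≤ (j : ℕ)
        omega
      have := hc.1.monotone hle
      omega
    · subst hj'
      rw [Function.update_of_ne hi', Function.update_self]
      have := hc.1 hij
      omega
    · rw [Function.update_of_ne hi', Function.update_of_ne hj']
      exact hc.1 hij
  -- 0 ≤ first value
  · rcases eq_or_ne (0 : Fin (r + 1)) j₀.rev with h | h
    · rw [← h, Function.update_self]
      have := hc.2.1; omega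
    · rw [Function.update_of_ne h]
      exact hc.2.1
  -- last value ≤ d
  · rcases eq_or_ne (Fin.last r) j₀.rev with h | h
    · have hj0 : j₀ = 0 := by
        have h2v := congrArg Fin.val h
        have h3 := j₀.is_lt
        simp [Fin.val_rev] at h2v
        ext; have h4 := Fin.val_rev j₀; have h7 := congrArg Fin.val h; have h5 : ((Fin.last r : Fin (r+1)) : ℕ) = r := rfl; have h6 : ((0 : Fin (r+1)) : ℕ) = 0 := rfl; omega
      have hkey : c (Fin.last r) ≤ d - 1 := by
        have hi2 := hi
        rw [hj0, Fin.rev_zero] at hi2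
        have := ha.2.1
        omega
      rw [← h, Function.update_self]
      omega
    · rw [Function.update_of_ne h]
      exact hc.2.2
  -- ρ̂ ≥ 0
  · have hShat : ∑ j : Fin (r + 1), max (m j) 0 ≤ 1 := by
      have : BNrhoHat 1 r d a c = 1 - ∑ j : Fin (r + 1), max (m j) 0 := rfl
      omega
    have hgoal : BNrhoHat 1 r d a (Function.update c j₀.rev (c j₀.rev + 1)) =
        1 - ∑ j : Fin (r + 1), max (m j + if j = j₀ then 1 else 0) 0 := by
      unfold BNrhoHat
      congr 1
      refine Finset.sum_congr rfl fun j _ => ?_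
      rw [hpoint j]
      simp only [hm]
      ring_nf
    rw [hgoal]
    rcases le_or_gt (m j₀) (-1) with hA | hB
    · have heq : ∑ j : Fin (r + 1), max (m j + if j = j₀ then 1 else 0) 0
          = ∑ j : Fin (r + 1), max (m j) 0 := by
        refine Finset.sum_congr rfl fun j _ => ?_
        rcases eq_or_ne j j₀ with h | h
        · subst h; simp; omega
        · simp [h]
      omega
    · have hz : m j₀ = 0 := by omega
      have hzero : ∀ j ∈ Finset.univ, m j = 0 := by
        rw [← Finset.sum_eq_zero_iff_of_nonneg (fun j _ => by have := hmin' j; omega)]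
        have : (0:ℤ) ≤ ∑ j : Fin (r + 1), m j :=
          Finset.sum_nonneg fun j _ => by have := hmin' j; omega
        omega
      have heq : ∑ j : Fin (r + 1), max (m j + if j = j₀ then 1 else 0) 0
          = ∑ j : Fin (r + 1), (if j = j₀ then (1:ℤ) else 0) := by
        refine Finset.sum_congr rfl fun j hj => ?_
        rw [hzero j hj]
        rcases eq_or_ne j j₀ with h | h <;> simp [h]
      rw [heq, Finset.sum_ite_eq' Finset.univ j₀ (fun _ => (1:ℤ))]
      simp
  -- ρ identity
  · have hsum : ∑ j : Fin (r + 1), (a j + Function.update c j₀.rev (c j₀.rev + 1) j.rev - (d - 1))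
        = (∑ j : Fin (r + 1), m j) + 1 := by
      calc ∑ j : Fin (r + 1), (a j + Function.update c j₀.rev (c j₀.rev + 1) j.rev - (d - 1))
          = ∑ j : Fin (r + 1), (m j + if j = j₀ then 1 else 0) := by
            refine Finset.sum_congr rfl fun j _ => ?_
            rw [hpoint j]; simp only [hm]; ring
        _ = (∑ j : Fin (r + 1), m j) + ∑ j : Fin (r + 1), (if j = j₀ then (1:ℤ) else 0) :=
            Finset.sum_add_distrib
        _ = (∑ j : Fin (r + 1), m j) + 1 := by
            rw [Finset.sum_ite_eq' Finset.univ j₀ (fun _ => (1:ℤ))]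
            simp
    have h1' : BNrho 1 r d a (Function.update c j₀.rev (c j₀.rev + 1))
        = 1 - ((∑ j : Fin (r + 1), m j) + 1) := by
      unfold BNrho
      rw [← hsum]
    have h2' : BNrho 1 r d a c = 1 - ∑ j : Fin (r + 1), m j := rfl
    omega
end

section
/- (Second type of move, case ρ̂_1 > 0.) Let g ≥ 2 be an integer, let a_•, b_•, c_• be vanishing sequences of rank r and degree d, and let a²_• be the vanishing sequence complementary to c_•, i.e. a²_j = d − c_{r−j}. Suppose ρ̂(1,d;a_•,c_•) > 0 and ρ̂(g−1,d;a²_•,b_•) = 0. Let j_0 be the minimal index at which a²_j + b_{r−j} attains its maximum value over j = 0,…,r. Then: (i) a_{j_0} + c_{r−j_0} ≤ d − 1; (ii) a²_{j_0} + b_{r−j_0} > d − (g−1); (iii) either j_0 = 0 or a²_{j_0−1} < a²_{j_0} − 1; and (iv) the sequences c′_• obtained from c_• by replacing c_{r−j_0} with c_{r−j_0} + 1, and a²′_• obtained from a²_• by replacing a²_{j_0} with a²_{j_0} − 1, are complementary vanishing sequences of rank r and degree d satisfying ρ̂(1,d;a_•,c′_•) ≥ 0 and ρ̂(g−1,d;a²′_•,b_•)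 > 0. -/
lemma sum_update_eq (r : ℕ) (F : Fin (r+1) → ℤ) (j₀ : Fin (r+1)) (v : ℤ) :
    ∑ j : Fin (r+1), Function.update F j₀ v j = ∑ j : Fin (r+1), F j - F j₀ + v := by
  rw [Finset.sum_update_of_mem (Finset.mem_univ j₀) F v,
    Finset.sum_eq_sum_sdiff_singleton_add (Finset.mem_univ j₀) F]
  ring


/-- Second type of move, case ρ̂₁ > 0: `g ≥ 2`, `a`, `b`, `c` vanishing
sequences, `a²` the complementary sequence of `c` (`a²ⱼ = d - c_{r-j}`),
`ρ̂(1,d;a,c) > 0`, `ρ̂(g-1,d;a²,b) = 0`, and `j₀` the minimal index at which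
`a²ⱼ + b_{r-j}` attains its maximum. Then:
(i) `a_{j₀} + c_{r-j₀} ≤ d - 1`;
(ii) `a²_{j₀} + b_{r-j₀} > d - (g-1)`;
(iii) either `j₀ = 0` or `a²_{j₀-1} < a²_{j₀} - 1`; and
(iv) replacing `c_{r-j₀}` by `c_{r-j₀} + 1` and `a²_{j₀}` by `a²_{j₀} - 1` yields
complementary vanishing sequences `c'`, `a²'` with `ρ̂(1,d;a,c') ≥ 0` and
`ρ̂(g-1,d;a²',b) > 0`. -/
theorem second_move_pos (r : ℕ) (d : ℤ) (hd : 0 ≤ d) (g : ℤ) (hg : 2 ≤ g)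
    (a b c a₂ : Fin (r + 1) → ℤ)
    (ha : IsVanishingSeq r d a) (hb : IsVanishingSeq r d b) (hc : IsVanishingSeq r d c)
    (ha₂def : ∀ j : Fin (r + 1), a₂ j = d - c j.rev)
    (hρ₁ : 0 < BNrhoHat 1 r d a c) (hρ₂ : BNrhoHat (g - 1) r d a₂ b = 0)
    (j₀ : Fin (r + 1))
    (hmax : ∀ j : Fin (r + 1), a₂ j + b j.rev ≤ a₂ j₀ + b j₀.rev)
    (hminIdx : ∀ j : Fin (r + 1), a₂ j + b j.rev = a₂ j₀ + b j₀.rev → j₀ ≤ j) :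
    a j₀ + c j₀.rev ≤ d - 1 ∧
    d - (g - 1) < a₂ j₀ + b j₀.rev ∧
    (j₀ = 0 ∨ ∀ i : Fin (r + 1), (i : ℕ) + 1 = (j₀ : ℕ) → a₂ i < a₂ j₀ - 1) ∧
    (IsVanishingSeq r d (Function.update c j₀.rev (c j₀.rev + 1)) ∧
      IsVanishingSeq r d (Function.update a₂ j₀ (a₂ j₀ - 1)) ∧
      (∀ j : Fin (r + 1), Function.update c j₀.rev (c j₀.rev + 1) j +
        Function.update a₂ j₀ (a₂ j₀ - 1) j.rev = d) ∧
      0 ≤ BNrhoHat 1 r d a (Function.update c j₀.rev (c j₀.rev + 1)) ∧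
      0 < BNrhoHat (g - 1) r d (Function.update a₂ j₀ (a₂ j₀ - 1)) b) := by
  obtain ⟨hamono, ha0, had⟩ := ha
  obtain ⟨hbmono, hb0, hbd⟩ := hb
  obtain ⟨hcmono, hc0, hcd⟩ := hc
  have ha₂mono : StrictMono a₂ := by
    intro x y hxy
    rw [ha₂def, ha₂def]
    have := hcmono (Fin.rev_lt_rev.mpr hxy)
    linarith
  have ha₂0 : 0 ≤ a₂ 0 := by
    rw [ha₂def, Fin.rev_zero]; linarith
  have ha₂last : a₂ (Fin.last r) ≤ d := by
    rw [ha₂def, Fin.rev_last]; linarith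
  -- claim 1
  have S1 : ∑ j : Fin (r+1), max (a j + c j.rev - (d - 1)) 0 = 0 := by
    have h1 : 0 ≤ ∑ j : Fin (r+1), max (a j + c j.rev - (d - 1)) 0 :=
      Finset.sum_nonneg fun j _ => le_max_right _ _
    unfold BNrhoHat at hρ₁; omega
  have claim1 : ∀ j : Fin (r+1), a j + c j.rev ≤ d - 1 := by
    intro j
    have h0 := (Finset.sum_eq_zero_iff_of_nonneg
      (fun j _ => le_max_right (a j + c j.rev - (d - 1)) 0)).mp S1 j (Finset.mem_univ j)
    have h1 := le_max_left (a j + c j.rev - (d - 1)) (0 : ℤ)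
    omega
  -- claim 2
  have S2 : ∑ j : Fin (r+1), max (a₂ j + b j.rev - (d - (g - 1))) 0 = g - 1 := by
    unfold BNrhoHat at hρ₂; omega
  have claim2 : d - (g - 1) < a₂ j₀ + b j₀.rev := by
    by_contra h
    push_neg at h
    have hz : ∑ j : Fin (r+1), max (a₂ j + b j.rev - (d - (g - 1))) 0 = 0 :=
      Finset.sum_eq_zero fun j _ => max_eq_right (by have := hmax j; linarith)
    omega
  -- claim 3
  have claim3 : ∀ i : Fin (r + 1), (i : ℕ) + 1 = (j₀ : ℕ) → a₂ i < a₂ j₀ - 1 := by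
    intro i hi
    have hilt : i < j₀ := by rw [Fin.lt_def]; omega
    have hlt := ha₂mono hilt
    rcases lt_or_ge (a₂ i) (a₂ j₀ - 1) with h | h
    · exact h
    have heq : a₂ i = a₂ j₀ - 1 := by omega
    have hbrev : b j₀.rev < b i.rev := hbmono (Fin.rev_lt_rev.mpr hilt)
    have := hmax i
    have heq2 : a₂ i + b i.rev = a₂ j₀ + b j₀.rev := by omega
    have := hminIdx i heq2
    exact absurd hilt (not_lt.mpr this)
  refine ⟨claim1 j₀, claim2, Or.inr claim3, ?_, ?_, ?_, ?_, ?_⟩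
  · -- c' vanishing
    refine ⟨Fin.strictMono_iff_lt_succ.mpr ?_, ?_, ?_⟩
    · intro i
      by_cases h1 : i.castSucc = j₀.rev
      · have h2 : i.succ ≠ j₀.rev := by
          rw [← h1]; exact (Fin.castSucc_lt_succ (i := i)).ne'
        rw [h1, Function.update_self, Function.update_of_ne h2]
        have hval : ((i.succ.rev : Fin (r + 1)) : ℕ) + 1 = (j₀ : ℕ) := by
          have e2 : (j₀ : ℕ) = ((i.castSucc.rev : Fin (r + 1)) : ℕ) := by
            have e : j₀ = i.castSucc.rev := by rw [h1, Fin.rev_rev]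
            rw [e]
          rw [Fin.val_rev, Fin.val_succ, e2, Fin.val_rev, Fin.coe_castSucc]
          have := i.isLt
          omega
        have h3 := claim3 _ hval
        rw [ha₂def, ha₂def, Fin.rev_rev] at h3
        linarith
      · by_cases h2 : i.succ = j₀.rev
        · rw [Function.update_of_ne h1, h2, Function.update_self, ← h2]
          have := hcmono (Fin.castSucc_lt_succ (i := i))
          linarith
        · rw [Function.update_of_ne h1, Function.update_of_ne h2]
          exact hcmono (Fin.castSucc_lt_succ (i := i))
    · by_cases h : (0 : Fin (r+1)) = j₀.rev
      · rw [← h] at *; rw [Function.update_self]; linarith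
      · rw [Function.update_of_ne h]; exact hc0
    · by_cases h : Fin.last r = j₀.rev
      · rw [← h, Function.update_self]
        have h1 := claim1 j₀
        have h2 : a 0 ≤ a j₀ := hamono.monotone (Fin.zero_le j₀)
        rw [← h] at h1
        linarith
      · rw [Function.update_of_ne h]; exact hcd
  · -- a₂' vanishing
    refine ⟨Fin.strictMono_iff_lt_succ.mpr ?_, ?_, ?_⟩
    · intro i
      by_cases h1 : i.castSucc = j₀
      · have h2 : i.succ ≠ j₀ := by rw [← h1]; exact (Fin.castSucc_lt_succ (i := i)).ne'
        rw [h1, Function.update_self, Function.update_of_ne h2]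
        have : a₂ j₀ < a₂ i.succ := by
          rw [← h1]; exact ha₂mono (Fin.castSucc_lt_succ (i := i))
        linarith
      · by_cases h2 : i.succ = j₀
        · rw [Function.update_of_ne h1, h2, Function.update_self]
          apply claim3
          rw [← h2, Fin.val_succ, Fin.coe_castSucc]
        · rw [Function.update_of_ne h1, Function.update_of_ne h2]
          exact ha₂mono (Fin.castSucc_lt_succ (i := i))
    · have key : 1 ≤ a₂ j₀ := by
        have h1 := claim1 j₀
        have h2 : a 0 ≤ a j₀ := hamono.monotone (Fin.zero_le j₀)
        rw [ha₂def]; linarith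
      by_cases h : (0 : Fin (r+1)) = j₀
      · rw [← h] at key
        rw [← h, Function.update_self]
        linarith
      · rw [Function.update_of_ne h]; exact ha₂0
    · by_cases h : Fin.last r = j₀
      · rw [h] at ha₂last
        rw [h, Function.update_self]
        linarith
      · rw [Function.update_of_ne h]; exact ha₂last
  · -- complementarity
    intro j
    by_cases h : j = j₀.rev
    · have hrev : j.rev = j₀ := by rw [h, Fin.rev_rev]
      rw [hrev, h, Function.update_self, Function.update_self, ha₂def j₀]
      ring
    · have hrev : j.rev ≠ j₀ := fun hh => h (by rw [← hh, Fin.rev_rev])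
      rw [Function.update_of_ne h, Function.update_of_ne hrev, ha₂def, Fin.rev_rev]
      ring
  · -- rho1 new
    have hfun : (fun j : Fin (r+1) =>
        max (a j + Function.update c j₀.rev (c j₀.rev + 1) j.rev - (d - 1)) 0) =
        Function.update (fun j : Fin (r+1) => max (a j + c j.rev - (d - 1)) 0) j₀
          (max (a j₀ + (c j₀.rev + 1) - (d - 1)) 0) := by
      funext j
      by_cases h : j = j₀
      · rw [h, Function.update_self, Function.update_self]
      · have hrev : j.rev ≠ j₀.rev := fun hh => h (Fin.rev_injective hh)
        rw [Function.update_of_ne h, Function.update_of_ne hrev]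
    unfold BNrhoHat
    rw [hfun, sum_update_eq, S1]
    have h1 := claim1 j₀
    have h2 : max (a j₀ + c j₀.rev - (d - 1)) 0 = 0 := max_eq_right (by linarith)
    have h3 : max (a j₀ + (c j₀.rev + 1) - (d - 1)) 0 ≤ 1 := by
      apply max_le <;> linarith
    omega
  · -- rho2 new
    have hfun : (fun j : Fin (r+1) =>
        max (Function.update a₂ j₀ (a₂ j₀ - 1) j + b j.rev - (d - (g - 1))) 0) =
        Function.update (fun j : Fin (r+1) => max (a₂ j + b j.rev - (d - (g - 1))) 0) j₀
          (max ((a₂ j₀ - 1) + b j₀.rev - (d - (g - 1))) 0) := by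
      funext j
      by_cases h : j = j₀
      · rw [h, Function.update_self, Function.update_self]
      · rw [Function.update_of_ne h, Function.update_of_ne h]
    unfold BNrhoHat
    rw [hfun, sum_update_eq, S2]
    have h1 : max (a₂ j₀ + b j₀.rev - (d - (g - 1))) 0 = a₂ j₀ + b j₀.rev - (d - (g - 1)) :=
      max_eq_left (by linarith)
    have h2 : max ((a₂ j₀ - 1) + b j₀.rev - (d - (g - 1))) 0 =
        a₂ j₀ + b j₀.rev - (d - (g - 1)) - 1 := by
      rw [max_eq_left (by linarith)]; ring
    omega
end

section
/- (Second type of move, case ρ̂_1 = 0.) Let g ≥ 2 be an integer, let a_•, b_•, c_• be vanishing sequences of rank r and degree d, and let a²_• be the vanishing sequence complementary to c_•, i.e. a²_j = d − c_{r−j}. Suppose ρ̂(g,d;a_•,b_•) ≥ 1, ρ̂(1,d;a_•,c_•) = 0, ρ̂(g−1,d;a²_•,b_•) = 0, and that every index j with a_j + c_{r−j} = d satisfies a²_j + b_{r−j} ≥ d − (g−1). Then: (i) there exists an index j with a²_j + b_{r−j} > d − (g−1) and a_j + c_{r−j} < d − 1; (ii) letting j_0 be the minimal index at which a²_j + b_{r−j}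 attains its maximum value among indices j with a_j + c_{r−j} < d − 1, one has a²_{j_0} + b_{r−j_0} > d − (g−1), and either j_0 = 0 or a²_{j_0−1} < a²_{j_0} − 1; and (iii) the sequences c′_• obtained from c_• by replacing c_{r−j_0} with c_{r−j_0} + 1, and a²′_• obtained from a²_• by replacing a²_{j_0} with a²_{j_0} − 1, are complementary vanishing sequences of rank r and degree d satisfying ρ̂(1,d;a_•,c′_•) ≥ 0 and ρ̂(g−1,d;a²′_•,b_•) > 0. -/
set_option maxHeartbeats 1000000 in
/-- Second type of move, case ρ̂₁ = 0: `g ≥ 2`, `a`, `b`, `c` vanishing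
sequences, `a²` the complementary sequence of `c` (`a²ⱼ = d - c_{r-j}`),
`ρ̂(g,d;a,b) ≥ 1`, `ρ̂(1,d;a,c) = 0`, `ρ̂(g-1,d;a²,b) = 0`, and every index `j` with
`aⱼ + c_{r-j} = d` satisfies `a²ⱼ + b_{r-j} ≥ d - (g-1)`. Then:
(i) there is an index `j` with `a²ⱼ + b_{r-j} > d - (g-1)` and `aⱼ + c_{r-j} < d - 1`;
(ii) for `j₀` the minimal index maximizing `a²ⱼ + b_{r-j}` among indices with
`aⱼ + c_{r-j} < d - 1`: `a²_{j₀} + b_{r-j₀} > d - (g-1)`, and either `j₀ = 0` or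
`a²_{j₀-1} < a²_{j₀} - 1`; and
(iii) replacing `c_{r-j₀}` by `c_{r-j₀} + 1` and `a²_{j₀}` by `a²_{j₀} - 1` yields
complementary vanishing sequences `c'`, `a²'` with `ρ̂(1,d;a,c') ≥ 0` and
`ρ̂(g-1,d;a²',b) > 0`. -/
theorem second_move_zero (r : ℕ) (d : ℤ) (hd : 0 ≤ d) (g : ℤ) (hg : 2 ≤ g)
    (a b c a₂ : Fin (r + 1) → ℤ)
    (ha : IsVanishingSeq r d a) (hb : IsVanishingSeq r d b) (hc : IsVanishingSeq r d c)
    (ha₂def : ∀ j : Fin (r + 1), a₂ j = d - c j.rev)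
    (hρ : 1 ≤ BNrhoHat g r d a b)
    (hρ₁ : BNrhoHat 1 r d a c = 0) (hρ₂ : BNrhoHat (g - 1) r d a₂ b = 0)
    (hcond : ∀ j : Fin (r + 1), a j + c j.rev = d → d - (g - 1) ≤ a₂ j + b j.rev) :
    (∃ j : Fin (r + 1), d - (g - 1) < a₂ j + b j.rev ∧ a j + c j.rev < d - 1) ∧
    (∀ j₀ : Fin (r + 1),
      a j₀ + c j₀.rev < d - 1 →
      (∀ j : Fin (r + 1), a j + c j.rev < d - 1 → a₂ j + b j.rev ≤ a₂ j₀ + b j₀.rev) →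
      (∀ j : Fin (r + 1), a j + c j.rev < d - 1 →
        a₂ j + b j.rev = a₂ j₀ + b j₀.rev → j₀ ≤ j) →
      (d - (g - 1) < a₂ j₀ + b j₀.rev ∧
        (j₀ = 0 ∨ ∀ i : Fin (r + 1), (i : ℕ) + 1 = (j₀ : ℕ) → a₂ i < a₂ j₀ - 1) ∧
        (IsVanishingSeq r d (Function.update c j₀.rev (c j₀.rev + 1)) ∧
          IsVanishingSeq r d (Function.update a₂ j₀ (a₂ j₀ - 1)) ∧
          (∀ j : Fin (r + 1), Function.update c j₀.rev (c j₀.rev + 1) j +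
            Function.update a₂ j₀ (a₂ j₀ - 1) j.rev = d) ∧
          0 ≤ BNrhoHat 1 r d a (Function.update c j₀.rev (c j₀.rev + 1)) ∧
          0 < BNrhoHat (g - 1) r d (Function.update a₂ j₀ (a₂ j₀ - 1)) b))) := by
  obtain ⟨haM, ha0, haL⟩ := ha
  obtain ⟨hbM, hb0, hbL⟩ := hb
  obtain ⟨hcM, hc0, hcL⟩ := hc
  have hrevlt : ∀ {i j : Fin (r+1)}, i < j → j.rev < i.rev := by
    intro i j h
    rw [Fin.lt_def] at *
    rw [Fin.val_rev, Fin.val_rev]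
    omega
  have ha₂M : StrictMono a₂ := by
    intro i j hij
    rw [ha₂def, ha₂def]
    have := hcM (hrevlt hij)
    linarith
  have key : ∀ j : Fin (r+1),
      a j + b j.rev - (d - g) = (a j + c j.rev - (d-1)) + (a₂ j + b j.rev - (d - (g-1))) := by
    intro j; rw [ha₂def]; ring
  have hs1 : ∑ j : Fin (r+1), max (a j + c j.rev - (d-1)) 0 = 1 := by
    unfold BNrhoHat at hρ₁; linarith
  have hs2 : ∑ j : Fin (r+1), max (a₂ j + b j.rev - (d-(g-1))) 0 = g - 1 := by
    unfold BNrhoHat at hρ₂; linarith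
  have hs0 : ∑ j : Fin (r+1), max (a j + b j.rev - (d-g)) 0 ≤ g - 1 := by
    unfold BNrhoHat at hρ; linarith
  have hαle : ∀ j : Fin (r+1), a j + c j.rev ≤ d := by
    intro j
    have h1 : max (a j + c j.rev - (d-1)) 0 ≤ ∑ i : Fin (r+1), max (a i + c i.rev - (d-1)) 0 :=
      Finset.single_le_sum (f := fun i => max (a i + c i.rev - (d-1)) 0)
        (fun i _ => le_max_right _ _) (Finset.mem_univ j)
    have := le_max_left (a j + c j.rev - (d-1)) 0
    linarith
  -- Part (i)
  have part1 : ∃ j : Fin (r+1), d - (g - 1) < a₂ j + b j.rev ∧ a j + c j.rev < d - 1 := by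
    by_contra hcontra
    push_neg at hcontra
    have hle : ∀ j ∈ Finset.univ, max (a₂ j + b j.rev - (d-(g-1))) 0
        ≤ max (a j + b j.rev - (d-g)) 0 := by
      intro j _
      rcases le_or_gt (a₂ j + b j.rev) (d - (g-1)) with h1 | h1
      · rw [max_eq_right (by linarith)]
        exact le_max_right _ _
      · have hαj := hcontra j h1
        have hk := key j
        rw [max_eq_left (by linarith), max_eq_left (by linarith)]
        linarith
    have heq : ∀ j ∈ Finset.univ, max (a₂ j + b j.rev - (d-(g-1))) 0
        = max (a j + b j.rev - (d-g)) 0 := by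
      refine (Finset.sum_eq_sum_iff_of_le hle).1 ?_
      exact le_antisymm (Finset.sum_le_sum hle) (le_of_le_of_eq hs0 hs2.symm)
    have hex : ∃ j : Fin (r+1), d - 1 < a j + c j.rev := by
      by_contra h'
      push_neg at h'
      have : ∑ j : Fin (r+1), max (a j + c j.rev - (d-1)) 0 = 0 :=
        Finset.sum_eq_zero (fun j _ => max_eq_right (by linarith [h' j]))
      omega
    obtain ⟨js, hjs⟩ := hex
    have heqs : a js + c js.rev = d := le_antisymm (hαle js) (by linarith)
    have hβs : d - (g-1) ≤ a₂ js + b js.rev := hcond js heqs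
    have hpt := heq js (Finset.mem_univ js)
    have hk := key js
    rw [max_eq_left (by linarith), max_eq_left (by linarith)] at hpt
    linarith
  refine ⟨part1, ?_⟩
  intro j₀ hj₀mem hmax hmin
  have h1 : d - (g - 1) < a₂ j₀ + b j₀.rev := by
    obtain ⟨j, hjβ, hjα⟩ := part1
    exact lt_of_lt_of_le hjβ (hmax j hjα)
  have h2 : j₀ = 0 ∨ ∀ i : Fin (r+1), (i : ℕ) + 1 = (j₀ : ℕ) → a₂ i < a₂ j₀ - 1 := by
    by_cases hz : j₀ = 0
    · exact Or.inl hz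
    right
    intro i hi
    by_contra hcon
    push_neg at hcon
    have hilt : i < j₀ := by rw [Fin.lt_def]; omega
    have hlt : a₂ i < a₂ j₀ := ha₂M hilt
    have hieq : a₂ i = a₂ j₀ - 1 := by omega
    have hb' : b j₀.rev < b i.rev := hbM (hrevlt hilt)
    have hc' : c i.rev = c j₀.rev + 1 := by
      have e1 := ha₂def i; have e2 := ha₂def j₀; omega
    have ha' : a i < a j₀ := haM hilt
    have hiα : a i + c i.rev < d - 1 := by omega
    have hile : a₂ i + b i.rev ≤ a₂ j₀ + b j₀.rev := hmax i hiα
    have hieq2 : a₂ i + b i.rev = a₂ j₀ + b j₀.rev := by omega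
    exact absurd (hmin i hiα hieq2) (not_le.mpr hilt)
  have haj0 : 0 ≤ a j₀ := le_trans ha0 (haM.monotone (Fin.zero_le _))
  have hck : c j₀.rev ≤ d - 2 := by linarith
  have hck0 : 0 ≤ c j₀.rev := le_trans hc0 (hcM.monotone (Fin.zero_le _))
  have ha₂0 : 0 ≤ a₂ 0 := by
    rw [ha₂def, Fin.rev_zero]; linarith [hcM.monotone (Fin.le_last (0:Fin (r+1)).rev), hcL]
  have ha₂L : a₂ (Fin.last r) ≤ d := by rw [ha₂def, Fin.rev_last]; linarith
  have ha₂j₀ : 2 ≤ a₂ j₀ := by rw [ha₂def]; linarith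
  refine ⟨h1, h2, ?_, ?_, ?_, ?_, ?_⟩
  · -- c' vanishing
    refine ⟨?_, ?_, ?_⟩
    · rw [Fin.strictMono_iff_lt_succ]
      intro i
      have hmono := hcM (Fin.castSucc_lt_succ (i := i))
      have hne : i.castSucc ≠ i.succ := ne_of_lt (Fin.castSucc_lt_succ (i := i))
      rw [Function.update_apply, Function.update_apply]
      split_ifs with e1 e2 e3
      · exact absurd (e1.trans e2.symm) hne
      · -- i.castSucc = j₀.rev, i.succ ≠ j₀.rev
        have hj₀ne : j₀ ≠ 0 := by
          intro h
          subst h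
          rw [Fin.rev_zero] at e1
          have hv := congrArg Fin.val e1
          simp only [Fin.coe_castSucc, Fin.val_last] at hv
          omega
        have hj0pos : 0 < (j₀ : ℕ) :=
          Nat.pos_of_ne_zero (fun h => hj₀ne (Fin.ext (by simp [h])))
        have hres := h2.resolve_left hj₀ne
        have hv1 := congrArg Fin.val e1
        simp only [Fin.coe_castSucc] at hv1
        rw [Fin.val_rev] at hv1
        have hidx : ((i.succ.rev : Fin (r+1)) : ℕ) + 1 = (j₀ : ℕ) := by
          rw [Fin.val_rev, Fin.val_succ]
          have := i.isLt
          have := j₀.isLt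
          omega
        have hfin := hres i.succ.rev hidx
        rw [ha₂def, ha₂def, Fin.rev_rev] at hfin
        linarith
      · -- i.succ = j₀.rev, i.castSucc ≠ j₀.rev
        rw [← e3]; linarith
      · exact hmono
    · rw [Function.update_apply]
      split_ifs with e
      · linarith
      · exact hc0
    · rw [Function.update_apply]
      split_ifs with e
      · linarith
      · exact hcL
  · -- a₂' vanishing
    refine ⟨?_, ?_, ?_⟩
    · rw [Fin.strictMono_iff_lt_succ]
      intro i
      have hmono := ha₂M (Fin.castSucc_lt_succ (i := i))
      have hne : i.castSucc ≠ i.succ := ne_of_lt (Fin.castSucc_lt_succ (i := i))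
      rw [Function.update_apply, Function.update_apply]
      split_ifs with e1 e2 e3
      · exact absurd (e1.trans e2.symm) hne
      · rw [← e1]; linarith
      · have hj₀ne : j₀ ≠ 0 := by rw [← e3]; exact Fin.succ_ne_zero i
        exact h2.resolve_left hj₀ne i.castSucc
          (by rw [← e3]; simp [Fin.coe_castSucc, Fin.val_succ])
      · exact hmono
    · rw [Function.update_apply]
      split_ifs with e
      · linarith
      · exact ha₂0
    · rw [Function.update_apply]
      split_ifs with e
      · rw [ha₂def]; linarith
      · exact ha₂L
  · -- complementarity
    intro j
    rcases eq_or_ne j j₀.rev with hj | hj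
    · rw [hj, Fin.rev_rev, Function.update_self, Function.update_self]
      have := ha₂def j₀
      linarith
    · have hjrev : j.rev ≠ j₀ := fun h => hj (by rw [← Fin.rev_rev j, h])
      rw [Function.update_of_ne hj, Function.update_of_ne hjrev]
      have := ha₂def j.rev
      rw [Fin.rev_rev] at this
      linarith
  · -- 0 ≤ BNrhoHat 1 d a c'
    have hcongr : ∑ j : Fin (r+1),
        max (a j + Function.update c j₀.rev (c j₀.rev + 1) j.rev - (d-1)) 0
        = ∑ j : Fin (r+1), max (a j + c j.rev - (d-1)) 0 := by
      apply Finset.sum_congr rfl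
      intro j _
      rcases eq_or_ne j j₀ with hj | hj
      · subst hj
        rw [Function.update_self]
        rw [max_eq_right (by linarith), max_eq_right (by linarith)]
      · rw [Function.update_of_ne (fun h => hj (Fin.rev_inj.mp h))]
    unfold BNrhoHat
    linarith [hcongr, hs1]
  · -- 0 < BNrhoHat (g-1) d a₂' b
    have hcongr2 : ∑ j : Fin (r+1),
        max (Function.update a₂ j₀ (a₂ j₀ - 1) j + b j.rev - (d-(g-1))) 0
        = ∑ j : Fin (r+1),
          (max (a₂ j + b j.rev - (d-(g-1))) 0 - (if j = j₀ then 1 else 0)) := by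
      apply Finset.sum_congr rfl
      intro j _
      rcases eq_or_ne j j₀ with hj | hj
      · subst hj
        rw [Function.update_self, if_pos rfl,
          max_eq_left (by linarith), max_eq_left (by linarith)]
        ring
      · rw [Function.update_of_ne hj, if_neg hj]
        ring
    have hsplit : ∑ j : Fin (r+1),
        (max (a₂ j + b j.rev - (d-(g-1))) 0 - (if j = j₀ then 1 else 0))
        = (g - 1) - 1 := by
      rw [Finset.sum_sub_distrib, hs2]
      congr 1
      simp
    unfold BNrhoHat
    linarith [hcongr2, hsplit]
end

section
/- (Combinatorial connectedness of the set of complementary splittings.) Let g ≥ 2 be an integer and a_•, b_• vanishing sequences of rank r and degree d with ρ̂(g,d;a_•,b_•) ≥ 1. Let S be the set of vanishing sequences c_• of rank r and degree d such that ρ̂(1,d;a_•,c_•) ≥ 0 and ρ̂(g−1,d;a²(c)_•,b_•) ≥ 0, where a²(c)_j = d − c_{r−j}. Consider the graph with vertex set S in which two sequences are adjacent if and only if they differ in exactly one index, and at that index they differ by exactly 1. Then this graph is connected, i.e., any two elements of S are joined by a path of such single-entry moves staying within S. -/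
/-- Two sequences are adjacent if they differ in exactly one index, and at that index
they differ by exactly 1. -/
def AdjSeq (r : ℕ) (c c' : Fin (r + 1) → ℤ) : Prop :=
  ∃ j : Fin (r + 1), (c' j - c j = 1 ∨ c j - c' j = 1) ∧ ∀ i : Fin (r + 1), i ≠ j → c i = c' i

/-- Combinatorial connectedness of the set of complementary splittings:
for `g ≥ 2` and vanishing sequences `a`, `b` with `ρ̂(g,d;a,b) ≥ 1`, the graph on the set
`S` of vanishing sequences `c` with `ρ̂(1,d;a,c) ≥ 0` and `ρ̂(g-1,d;a²(c),b) ≥ 0`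
(where `a²(c)ⱼ = d - c_{r-j}`), with edges the single-entry moves changing one entry by 1,
is connected: any two elements of `S` are joined by a path of such moves staying in `S`. -/
theorem splittings_connected (r : ℕ) (d : ℤ) (hd : 0 ≤ d) (g : ℤ) (hg : 2 ≤ g)
    (a b : Fin (r + 1) → ℤ)
    (ha : IsVanishingSeq r d a) (hb : IsVanishingSeq r d b)
    (hρ : 1 ≤ BNrhoHat g r d a b)
    (S : Set (Fin (r + 1) → ℤ))
    (hS : S = {c | IsVanishingSeq r d c ∧ 0 ≤ BNrhoHat 1 r d a c ∧
      0 ≤ BNrhoHat (g - 1) r d (fun j => d - c j.rev) b}) :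
    ∀ c ∈ S, ∀ c' ∈ S,
      Relation.ReflTransGen (fun x y => x ∈ S ∧ y ∈ S ∧ AdjSeq r x y) c c' := by
  classical
  set step := fun x y => x ∈ S ∧ y ∈ S ∧ AdjSeq r x y with hstep
  set U : Fin (r + 1) → ℤ := fun i => d - a i.rev with hUdef
  set t : Fin (r + 1) → ℤ := fun i => U i - 1 with htdef
  -- reindexing of sums by `Fin.rev`
  have sumrev : ∀ f : Fin (r + 1) → ℤ, ∑ j : Fin (r + 1), f j.rev = ∑ j : Fin (r + 1), f j :=
    fun f => Fintype.sum_bijective Fin.rev Fin.rev_bijective _ f (fun _ => rfl)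
  -- membership characterization
  have memS : ∀ c, c ∈ S ↔ IsVanishingSeq r d c ∧
      (∑ i : Fin (r + 1), max (c i - U i + 1) 0) ≤ 1 ∧
      (∑ i : Fin (r + 1), max (b i + (g - 1) - c i) 0) ≤ g - 1 := by
    intro c
    have eq1 : ∑ j : Fin (r + 1), max (a j + c j.rev - (d - 1)) 0
        = ∑ i : Fin (r + 1), max (c i - U i + 1) 0 := by
      rw [← sumrev (fun i => max (c i - U i + 1) 0)]
      refine Finset.sum_congr rfl fun j _ => ?_
      simp only [hUdef, Fin.rev_rev]
      congr 1
      ring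
    have eq2 : ∑ j : Fin (r + 1), max ((d - c j.rev) + b j.rev - (d - (g - 1))) 0
        = ∑ i : Fin (r + 1), max (b i + (g - 1) - c i) 0 := by
      rw [← sumrev (fun i => max (b i + (g - 1) - c i) 0)]
      refine Finset.sum_congr rfl fun j _ => ?_
      congr 1
      ring
    rw [hS]
    simp only [Set.mem_setOf_eq, BNrhoHat, eq1, eq2]
    constructor
    · rintro ⟨h1, h2, h3⟩
      exact ⟨h1, by linarith, by linarith⟩
    · rintro ⟨h1, h2, h3⟩
      exact ⟨h1, by linarith, by linarith⟩
  -- from the main hypothesis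
  have hρ' : ∑ j : Fin (r + 1), max (a j + b j.rev - (d - g)) 0 ≤ g - 1 := by
    have h : (1 : ℤ) ≤ g - ∑ j : Fin (r + 1), max (a j + b j.rev - (d - g)) 0 := hρ
    linarith
  have hbU : ∀ i, b i + 1 ≤ U i := by
    intro i
    have h1 : max (a i.rev + b i.rev.rev - (d - g)) 0
        ≤ ∑ j : Fin (r + 1), max (a j + b j.rev - (d - g)) 0 :=
      Finset.single_le_sum (f := fun j => max (a j + b j.rev - (d - g)) 0)
        (fun j _ => le_max_right _ 0) (Finset.mem_univ i.rev)
    rw [Fin.rev_rev] at h1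
    have h2 : a i.rev + b i - (d - g) ≤ g - 1 :=
      le_trans (le_max_left _ 0) (le_trans h1 hρ')
    simp only [hUdef]
    linarith
  -- the target t is in S
  have htmono : StrictMono t := by
    intro i j hij
    have h0 : j.rev < i.rev := Fin.rev_lt_rev.mpr hij
    have := ha.1 h0
    simp only [htdef, hUdef]
    linarith
  have htlast : t (Fin.last r) ≤ d := by
    simp only [htdef, hUdef, Fin.rev_last]
    linarith [ha.2.1]
  have ht0 : 0 ≤ t 0 := by
    have h1 := hbU 0
    have h2 := hb.2.1
    simp only [htdef]
    linarith
  have htS : t ∈ S := by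
    rw [memS]
    refine ⟨⟨htmono, ht0, htlast⟩, ?_, ?_⟩
    · have hz : ∀ i : Fin (r + 1), max (t i - U i + 1) 0 = 0 := by
        intro i
        simp only [htdef]
        simp
      rw [Finset.sum_congr rfl (fun i _ => hz i)]
      simp
    · have key : ∑ i : Fin (r + 1), max (b i + (g - 1) - t i) 0
          = ∑ j : Fin (r + 1), max (a j + b j.rev - (d - g)) 0 := by
        rw [← sumrev (fun j => max (a j + b j.rev - (d - g)) 0)]
        refine Finset.sum_congr rfl fun i _ => ?_
        simp only [htdef, hUdef, Fin.rev_rev]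
        congr 1
        ring
      rw [key]
      exact hρ'
  -- basic facts about members of S
  have hcU : ∀ c ∈ S, ∀ i, c i ≤ U i := by
    intro c hc i
    obtain ⟨-, h2, -⟩ := (memS c).mp hc
    have h1 : max (c i - U i + 1) 0 ≤ ∑ j : Fin (r + 1), max (c j - U j + 1) 0 :=
      Finset.single_le_sum (f := fun j => max (c j - U j + 1) 0)
        (fun j _ => le_max_right _ 0) (Finset.mem_univ i)
    have h3 := le_max_left (c i - U i + 1) 0
    linarith
  have hone : ∀ c ∈ S, ∀ i j, i ≠ j → c i = U i → c j = U j → False := by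
    intro c hc i j hij hi hj
    obtain ⟨-, h2, -⟩ := (memS c).mp hc
    have h3 : ∑ x ∈ ({i, j} : Finset (Fin (r + 1))), max (c x - U x + 1) 0
        ≤ ∑ x : Fin (r + 1), max (c x - U x + 1) 0 :=
      Finset.sum_le_sum_of_subset_of_nonneg (Finset.subset_univ _)
        (fun x _ _ => le_max_right _ 0)
    rw [Finset.sum_pair hij, hi, hj] at h3
    simp at h3
    linarith
  -- symmetry of the step relation
  have hsymm : Symmetric step := by
    rintro x y ⟨hx, hy, j, hj1, hj2⟩
    exact ⟨hy, hx, j, hj1.symm, fun i hi => (hj2 i hi).symm⟩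
  -- finishing move: if c ∈ S dominates t, then c reaches t
  have hfinish : ∀ c ∈ S, (∀ i, t i ≤ c i) → Relation.ReflTransGen step c t := by
    intro c hc hle
    by_cases hex : ∃ j, c j = U j
    · obtain ⟨j, hj⟩ := hex
      have hct : ∀ i, i ≠ j → c i = t i := by
        intro i hi
        have h1 : c i ≤ U i := hcU c hc i
        have h2 : c i ≠ U i := fun h => hone c hc i j hi h hj
        have h4 := hle i
        simp only [htdef] at h4 ⊢
        omega
      have hadj : AdjSeq r c t := by
        refine ⟨j, Or.inr ?_, hct⟩
        simp only [htdef]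
        omega
      exact Relation.ReflTransGen.single ⟨hc, htS, hadj⟩
    · push_neg at hex
      have hct : c = t := by
        funext i
        have h1 : c i ≤ U i := hcU c hc i
        have h2 := hex i
        have h4 := hle i
        simp only [htdef] at h4 ⊢
        omega
      rw [hct]
  -- main reachability by induction on total deficiency
  have reach : ∀ n : ℕ, ∀ c ∈ S, (∑ i : Fin (r + 1), (t i - c i).toNat) ≤ n →
      Relation.ReflTransGen step c t := by
    intro n
    induction n with
    | zero =>
      intro c hc hsum
      refine hfinish c hc fun i => ?_
      have h1 : (t i - c i).toNat ≤ ∑ j : Fin (r + 1), (t j - c j).toNat :=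
        Finset.single_le_sum (f := fun j => (t j - c j).toNat)
          (fun j _ => Nat.zero_le _) (Finset.mem_univ i)
      omega
    | succ n ih =>
      intro c hc hsum
      by_cases hdef : ∃ i, c i < t i
      · have hex : ∃ k, c k < t k ∧ ∀ j, k < j → t j ≤ c j := by
          obtain ⟨i0, hi0⟩ := hdef
          have hTne : (Finset.univ.filter (fun i => c i < t i)).Nonempty :=
            ⟨i0, by simp [hi0]⟩
          refine ⟨(Finset.univ.filter (fun i => c i < t i)).max' hTne, ?_, ?_⟩
          · have h := Finset.max'_mem _ hTne
            simpa using h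
          · intro j hj
            by_contra h
            push_neg at h
            exact absurd (Finset.le_max' _ j (by simp [h])) (not_le.mpr hj)
        obtain ⟨k, hklt, hkmax⟩ := hex
        obtain ⟨c2, hc2k, hc2ne⟩ : ∃ c2 : Fin (r + 1) → ℤ,
            c2 k = c k + 1 ∧ ∀ i, i ≠ k → c2 i = c i :=
          ⟨Function.update c k (c k + 1), Function.update_self k _ c,
            fun i hi => Function.update_of_ne hi _ c⟩
        obtain ⟨⟨hcm, hc0, hcl⟩, hcup, hclow⟩ := (memS c).mp hc
        have hc2S : c2 ∈ S := by
          rw [memS]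
          refine ⟨⟨?_, ?_, ?_⟩, ?_, ?_⟩
          · intro i j hij
            by_cases hik : i = k
            · by_cases hjk : j = k
              · rw [hik, hjk] at hij
                exact absurd hij (lt_irrefl _)
              · rw [hik] at hij ⊢
                rw [hc2k, hc2ne j hjk]
                have h1 : c k + 1 ≤ t k := by omega
                have h2 : t k < t j := htmono hij
                have h3 : t j ≤ c j := hkmax j hij
                linarith
            · rw [hc2ne i hik]
              by_cases hjk : j = k
              · rw [hjk] at hij ⊢
                rw [hc2k]
                have := hcm hij
                linarith
              · rw [hc2ne j hjk]
                exact hcm hij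
          · rcases eq_or_ne (0 : Fin (r + 1)) k with h | h
            · rw [← h] at hc2k
              rw [hc2k]
              linarith
            · rw [hc2ne 0 h]
              exact hc0
          · rcases eq_or_ne (Fin.last r) k with h | h
            · rw [← h] at hc2k hklt
              rw [hc2k]
              have h2 : t (Fin.last r) ≤ d := htlast
              linarith
            · rw [hc2ne _ h]
              exact hcl
          · refine le_trans (Finset.sum_le_sum fun i _ => ?_) hcup
            by_cases hik : i = k
            · rw [hik, hc2k]
              have h1 : c k + 1 ≤ t k := by omega
              have h2 : c k + 1 - U k + 1 ≤ 0 := by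
                simp only [htdef] at h1
                linarith
              calc max (c k + 1 - U k + 1) 0 = 0 := max_eq_right h2
                _ ≤ max (c k - U k + 1) 0 := le_max_right _ _
            · rw [hc2ne i hik]
          · refine le_trans (Finset.sum_le_sum fun i _ => ?_) hclow
            by_cases hik : i = k
            · rw [hik, hc2k]
              exact max_le_max (by linarith [hklt]) le_rfl
            · rw [hc2ne i hik]
        have hstep1 : step c c2 := by
          refine ⟨hc, hc2S, k, Or.inl ?_, fun i hi => (hc2ne i hi).symm⟩
          rw [hc2k]
          ring
        have hdec : (∑ i : Fin (r + 1), (t i - c2 i).toNat) ≤ n := by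
          have e1 : (t k - c2 k).toNat + ∑ i ∈ Finset.univ.erase k, (t i - c2 i).toNat
              = ∑ i : Fin (r + 1), (t i - c2 i).toNat :=
            Finset.add_sum_erase _ (fun i => (t i - c2 i).toNat) (Finset.mem_univ k)
          have e2 : (t k - c k).toNat + ∑ i ∈ Finset.univ.erase k, (t i - c i).toNat
              = ∑ i : Fin (r + 1), (t i - c i).toNat :=
            Finset.add_sum_erase _ (fun i => (t i - c i).toNat) (Finset.mem_univ k)
          have e3 : ∑ i ∈ Finset.univ.erase k, (t i - c2 i).toNat
              = ∑ i ∈ Finset.univ.erase k, (t i - c i).toNat := by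
            refine Finset.sum_congr rfl fun i hi => ?_
            rw [hc2ne i (Finset.mem_erase.mp hi).1]
          have e4 : (t k - c2 k).toNat + 1 ≤ (t k - c k).toNat := by
            rw [hc2k]
            omega
          omega
        exact Relation.ReflTransGen.head hstep1 (ih c2 hc2S hdec)
      · push_neg at hdef
        exact hfinish c hc hdef
  intro c hc c' hc'
  have h1 := reach _ c hc le_rfl
  have h2 := reach _ c' hc' le_rfl
  exact h1.trans (by haveI : Std.Symm step := ⟨fun _ _ h => hsymm h⟩; exact Std.Symm.symm _ _ h2)
end

section
/- Let g ≥ 2 be an integer and a_•, b_• vanishing sequences of rank r and degree d with ρ̂(g,d;a_•,b_•) ≥ 1. Suppose there exists at least one vanishing sequence c_• of rank r and degree d with ρ̂(1,d;a_•,c_•) ≥ 0 and ρ̂(g−1,d;a²(c)_•,b_•) ≥ 0, where a²(c)_j = d − c_{r−j}. Then there exists a vanishing sequence c_• of rank r and degree d with ρ̂(1,d;a_•,c_•) ≥ 0 and ρ̂(g−1,d;a²(c)_•,b_•) > 0. -/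
/-- for `g ≥ 2` and vanishing sequences `a`, `b` with `ρ̂(g,d;a,b) ≥ 1`,
if there is a vanishing sequence `c` with `ρ̂(1,d;a,c) ≥ 0` and `ρ̂(g-1,d;a²(c),b) ≥ 0`
(where `a²(c)ⱼ = d - c_{r-j}`), then there is one with `ρ̂(1,d;a,c) ≥ 0` and
`ρ̂(g-1,d;a²(c),b) > 0`. -/
theorem exists_splitting_pos (r : ℕ) (d : ℤ) (hd : 0 ≤ d) (g : ℤ) (hg : 2 ≤ g)
    (a b : Fin (r + 1) → ℤ)
    (ha : IsVanishingSeq r d a) (hb : IsVanishingSeq r d b)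
    (hρ : 1 ≤ BNrhoHat g r d a b)
    (hex : ∃ c : Fin (r + 1) → ℤ, IsVanishingSeq r d c ∧ 0 ≤ BNrhoHat 1 r d a c ∧
      0 ≤ BNrhoHat (g - 1) r d (fun j => d - c j.rev) b) :
    ∃ c : Fin (r + 1) → ℤ, IsVanishingSeq r d c ∧ 0 ≤ BNrhoHat 1 r d a c ∧
      0 < BNrhoHat (g - 1) r d (fun j => d - c j.rev) b := by
  clear hex
  obtain ⟨haM, ha0, haL⟩ := ha
  obtain ⟨hbM, hb0, hbL⟩ := hb
  have hsum : ∑ j : Fin (r+1), max (a j + b j.rev - (d - g)) 0 ≤ g - 1 := by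
    unfold BNrhoHat at hρ; linarith
  have hrev : ∀ f : Fin (r+1) → ℤ, ∑ j : Fin (r+1), f j.rev = ∑ j : Fin (r+1), f j :=
    fun f => Fintype.sum_equiv Fin.revPerm (fun j => f j.rev) f (fun j => rfl)
  set Y : Fin (r+1) → ℤ := fun j => d - 1 - a j.rev with hY
  set c0 : Fin (r+1) → ℤ := fun j => min (b j + g - 1) (Y j) with hc0
  have hc0M : StrictMono c0 := by
    intro i j hij
    have h1 : b i < b j := hbM hij
    have h2' : a j.rev < a i.rev := haM (Fin.rev_lt_rev.mpr hij)
    simp only [hc0, hY]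
    exact lt_min (lt_of_le_of_lt (min_le_left _ _) (by linarith))
      (lt_of_le_of_lt (min_le_right _ _) (by linarith))
  have hkey : ∀ k, max (b k - c0 k + g - 1) 0 = max (a k.rev + b k - (d - g)) 0 := by
    intro k
    simp only [hc0, hY]
    rcases le_total (b k + g - 1) (d - 1 - a k.rev) with h | h
    · rw [min_eq_left h]
      have h1 : b k - (b k + g - 1) + g - 1 = 0 := by ring
      rw [h1, max_eq_right (le_refl (0:ℤ)), eq_comm]
      exact max_eq_right (by linarith)
    · rw [min_eq_right h]
      congr 1; ring
  have haLd : a (Fin.last r) + b 0 ≤ d - 1 := by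
    have h1 : max (a (Fin.last r) + b (Fin.last r).rev - (d - g)) 0
        ≤ ∑ j : Fin (r+1), max (a j + b j.rev - (d-g)) 0 :=
      Finset.single_le_sum (f := fun j => max (a j + b j.rev - (d-g)) 0)
        (fun j _ => le_max_right _ 0) (Finset.mem_univ _)
    rw [Fin.rev_last] at h1
    have h2 := le_max_left (a (Fin.last r) + b 0 - (d - g)) (0:ℤ)
    linarith
  have hb00 : (0:ℤ) ≤ b 0 := hb0
  by_cases hall : ∀ j : Fin (r+1), a j.rev + b j - (d - g) ≤ 0
  · -- no bump needed
    refine ⟨c0, ⟨hc0M, ?_, ?_⟩, ?_, ?_⟩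
    · have h0 := hall 0
      rw [Fin.rev_zero] at h0
      simp only [hc0, hY, Fin.rev_zero]
      exact le_min (by linarith) (by linarith)
    · calc c0 (Fin.last r) ≤ Y (Fin.last r) := min_le_right _ _
        _ ≤ d := by simp only [hY, Fin.rev_last]; linarith
    · unfold BNrhoHat
      have hz : ∀ j : Fin (r+1), max (a j + c0 j.rev - (d - 1)) 0 = 0 := by
        intro j
        have h1 : c0 j.rev ≤ Y j.rev := min_le_right _ _
        simp only [hY, Fin.rev_rev] at h1
        exact max_eq_right (by linarith)
      rw [Finset.sum_congr rfl (fun j _ => hz j)]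
      simp
    · unfold BNrhoHat
      have hz : ∀ j : Fin (r+1), max ((d - c0 j.rev) + b j.rev - (d - (g-1))) 0 = 0 := by
        intro j
        have h1 := hkey j.rev
        have h2 := hall j.rev
        rw [Fin.rev_rev] at h1 h2
        have h3 : max (a j + b j.rev - (d-g)) 0 = 0 := max_eq_right (by linarith)
        rw [h3] at h1
        calc max ((d - c0 j.rev) + b j.rev - (d - (g-1))) 0
            = max (b j.rev - c0 j.rev + g - 1) 0 := by congr 1; ring
          _ = 0 := h1
      rw [Finset.sum_congr rfl (fun j _ => hz j)]
      simp; linarith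
  · -- bump case
    push_neg at hall
    set S : Finset (Fin (r+1)) := Finset.univ.filter (fun j => 0 < a j.rev + b j - (d-g)) with hS
    have hSne : S.Nonempty := by
      obtain ⟨j, hj⟩ := hall
      exact ⟨j, by simp [hS]; linarith⟩
    set J := S.max' hSne with hJ
    have hJpos : 0 < a J.rev + b J - (d - g) := by
      have h := S.max'_mem hSne
      simp only [hS, Finset.mem_filter] at h
      exact h.2
    have hJpos1 : 1 ≤ a J.rev + b J - (d - g) := hJpos
    have hJmax : ∀ j, J < j → a j.rev + b j - (d-g) ≤ 0 := by
      intro j hj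
      by_contra h
      push_neg at h
      exact absurd (S.le_max' j (by simp only [hS, Finset.mem_filter]; exact ⟨Finset.mem_univ _, h⟩)) (not_le.mpr hj)
    set c : Fin (r+1) → ℤ := fun j => if j = J then Y J + 1 else c0 j with hc
    have hc0J : c0 J = Y J := by
      simp only [hc0]
      exact min_eq_right (by simp only [hY]; linarith)
    have hcJ : c J = Y J + 1 := by simp only [hc, if_pos rfl]
    have hcne : ∀ j, j ≠ J → c j = c0 j := by
      intro j hj; simp only [hc, if_neg hj]
    have hcM : StrictMono c := by
      intro i j hij
      rcases eq_or_ne j J with rfl | hjJ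
      · rw [hcJ, hcne i (ne_of_lt hij)]
        have h1 := hc0M hij
        rw [hc0J] at h1
        linarith
      · rw [hcne j hjJ]
        rcases eq_or_ne i J with hiJ | hiJ
        · rw [hiJ, hcJ]
          rw [hiJ] at hij
          have hj0 := hJmax j hij
          have hbij : b J + 1 ≤ b j := Int.add_one_le_iff.mpr (hbM hij)
          have hle : b j + g - 1 ≤ Y j := by simp only [hY]; linarith
          have hc0j : c0 j = b j + g - 1 := by simp only [hc0]; exact min_eq_left hle
          rw [hc0j]
          simp only [hY]
          linarith
        · rw [hcne i hiJ]; exact hc0M hij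
    refine ⟨c, ⟨hcM, ?_, ?_⟩, ?_, ?_⟩
    · rcases eq_or_ne (0 : Fin (r+1)) J with h0J | h0J
      · have h := hcJ
        rw [← h0J] at h
        rw [h]
        simp only [hY, Fin.rev_zero]
        linarith
      · rw [hcne 0 h0J]
        simp only [hc0, hY, Fin.rev_zero]
        exact le_min (by linarith) (by linarith)
    · rcases eq_or_ne (Fin.last r) J with hLJ | hLJ
      · have h := hcJ
        rw [← hLJ] at h
        rw [h]
        simp only [hY, Fin.rev_last]
        linarith
      · rw [hcne _ hLJ]
        calc c0 (Fin.last r) ≤ Y (Fin.last r) := min_le_right _ _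
          _ ≤ d := by simp only [hY, Fin.rev_last]; linarith
    · unfold BNrhoHat
      have hz : ∀ j : Fin (r+1), max (a j + c j.rev - (d - 1)) 0
          = if j = J.rev then 1 else 0 := by
        intro j
        rcases eq_or_ne j J.rev with rfl | hne
        · rw [if_pos rfl, Fin.rev_rev, hcJ]
          simp only [hY]
          have : a J.rev + (d - 1 - a J.rev + 1) - (d - 1) = 1 := by ring
          rw [this]
          exact max_eq_left (by norm_num)
        · rw [if_neg hne]
          have hjr : j.rev ≠ J := by
            intro h; apply hne; rw [← h, Fin.rev_rev]
          rw [hcne _ hjr]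
          have h1 : c0 j.rev ≤ Y j.rev := min_le_right _ _
          simp only [hY, Fin.rev_rev] at h1
          exact max_eq_right (by linarith)
      rw [Finset.sum_congr rfl (fun j _ => hz j), Finset.sum_ite_eq' _ J.rev (fun _ => (1:ℤ))]
      simp
    · unfold BNrhoHat
      have hfu : ∀ k : Fin (r+1), max (b k - c k + g - 1) 0
          = max (a k.rev + b k - (d-g)) 0 - (if k = J then 1 else 0) := by
        intro k
        rcases eq_or_ne k J with hkJ | hne
        · rw [hkJ, if_pos rfl, hcJ]
          simp only [hY]
          have h1 : b J - (d - 1 - a J.rev + 1) + g - 1 = (a J.rev + b J - (d-g)) - 1 := by ring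
          rw [h1, max_eq_left (by linarith), max_eq_left (by linarith)]
        · rw [if_neg hne, hcne k hne, hkey k]
          ring
      have hstep : ∑ j : Fin (r+1), max ((d - c j.rev) + b j.rev - (d - (g-1))) 0
          = ∑ j : Fin (r+1), max (b j - c j + g - 1) 0 := by
        rw [← hrev (fun k => max (b k - c k + g - 1) 0)]
        refine Finset.sum_congr rfl (fun j _ => ?_)
        congr 1; ring
      have hsum2 : ∑ j : Fin (r+1), max (b j - c j + g - 1) 0
          = (∑ j : Fin (r+1), max (a j.rev + b j - (d-g)) 0) - 1 := by
        rw [Finset.sum_congr rfl (fun j _ => hfu j), Finset.sum_sub_distrib,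
          Finset.sum_ite_eq' _ J (fun _ => (1:ℤ))]
        simp
      have hrevsum : ∑ j : Fin (r+1), max (a j.rev + b j - (d-g)) 0
          = ∑ j : Fin (r+1), max (a j + b j.rev - (d-g)) 0 := by
        rw [← hrev (fun k => max (a k + b k.rev - (d-g)) 0)]
        refine Finset.sum_congr rfl (fun j _ => ?_)
        rw [Fin.rev_rev]
      have : ∑ j : Fin (r+1), max ((d - c j.rev) + b j.rev - (d - (g-1))) 0 ≤ g - 2 := by
        rw [hstep, hsum2, hrevsum]; linarith
      linarith
end
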